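/- Let α ∈ (1/2, ∞), let a ∈ ℝ^n with a ≠ 0, and let φ : [1,∞) → ℝ^n satisfy |φ(t)| ≤ k√t for all t ≥ 1. Then the function t ↦ 1/|a t + φ(t) + c|^α − 1/|a t|^α (for any fixed c ∈ ℝ^n) is integrable on [T, ∞) for T sufficiently large, with bound |1/|at+φ(t)+c|^α − 1/|at|^α| ≤ C t^{−(1/2+α)} for t large and some constant C depending on a, c, k, α. -/
import Mathlib


open MeasureTheory Set

/-- Mean value estimate for `x ↦ x^(-α)` on `[m, ∞)`. -/
lemma rpow_neg_lipschitz {α m x y : ℝ} (hα : 0 < α) (hm : 0 < m)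
    (hx : m ≤ x) (hy : m ≤ y) :
    |x ^ (-α) - y ^ (-α)| ≤ α * m ^ (-α - 1) * |x - y| := by
  have key := Convex.norm_image_sub_le_of_norm_hasDerivWithin_le
    (f := fun z : ℝ => z ^ (-α)) (f' := fun z : ℝ => (-α) * z ^ (-α - 1))
    (s := Set.Ici m) (C := α * m ^ (-α - 1))
    (fun z hz => (Real.hasDerivAt_rpow_const
      (Or.inl (ne_of_gt (lt_of_lt_of_le hm hz)))).hasDerivWithinAt)
    (fun z hz => by
      have hz0 : 0 < z := lt_of_lt_of_le hm hz
      have h1 : z ^ (-α - 1) ≤ m ^ (-α - 1) :=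
        Real.rpow_le_rpow_of_nonpos hm hz (by linarith)
      have h2 : (0:ℝ) ≤ z ^ (-α - 1) := Real.rpow_nonneg hz0.le _
      rw [Real.norm_eq_abs, abs_mul, abs_neg, abs_of_pos hα, abs_of_nonneg h2]
      exact mul_le_mul_of_nonneg_left h1 hα.le)
    (convex_Ici m) hy hx
  simpa [Real.norm_eq_abs] using key

set_option maxHeartbeats 1000000 in
/-- Key integrability estimate in the hyperbolic regime, `α > 1/2`:
the renormalized potential term `1/|at+φ(t)+c|^α − 1/|at|^α` is integrable at
infinity and bounded by `C t^{−(1/2+α)}` for large `t`, when `|φ(t)| ≤ k√t`. -/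
theorem renormalized_potential_integrable (n : ℕ) (α k : ℝ) (hα : 1 / 2 < α)
    (a c : EuclideanSpace ℝ (Fin n)) (ha : a ≠ 0)
    (φ : ℝ → EuclideanSpace ℝ (Fin n)) (hφc : Continuous φ)
    (hφ : ∀ t : ℝ, 1 ≤ t → ‖φ t‖ ≤ k * Real.sqrt t) :
    ∃ T : ℝ, 1 ≤ T ∧ ∃ C : ℝ,
      IntegrableOn
        (fun t => ‖t • a + φ t + c‖ ^ (-α) - ‖t • a‖ ^ (-α)) (Set.Ici T) ∧
      ∀ t : ℝ, T ≤ t →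
        |‖t • a + φ t + c‖ ^ (-α) - ‖t • a‖ ^ (-α)| ≤ C * t ^ (-(1 / 2 + α)) := by
  have hα0 : 0 < α := lt_trans (by norm_num) hα
  have hna : 0 < ‖a‖ := norm_pos_iff.mpr ha
  set K : ℝ := max k 0 + ‖c‖ with hK
  have hK0 : 0 ≤ K := add_nonneg (le_max_right _ _) (norm_nonneg _)
  set T : ℝ := max 1 ((2 * K / ‖a‖) ^ 2 + 1) with hT
  have hT1 : 1 ≤ T := le_max_left _ _
  have hT0 : 0 < T := lt_of_lt_of_le one_pos hT1
  set A : ℝ := ‖a‖ / 2 with hA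
  have hA0 : 0 < A := by positivity
  set C : ℝ := α * A ^ (-α - 1) * K with hC
  have hlow : ∀ t : ℝ, T ≤ t → A * t ≤ ‖t • a + φ t + c‖ := by
    intro t ht
    have ht1 : (1:ℝ) ≤ t := le_trans hT1 ht
    have ht0 : 0 < t := lt_of_lt_of_le one_pos ht1
    have hs1 : 1 ≤ Real.sqrt t := by simpa using Real.sqrt_le_sqrt ht1
    have hs0 : 0 < Real.sqrt t := lt_of_lt_of_le one_pos hs1
    have hφc' : ‖φ t + c‖ ≤ K * Real.sqrt t := by
      calc ‖φ t + c‖ ≤ ‖φ t‖ + ‖c‖ := norm_add_le _ _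
        _ ≤ k * Real.sqrt t + ‖c‖ * Real.sqrt t := by
            have h1 := hφ t ht1
            have h2 : ‖c‖ ≤ ‖c‖ * Real.sqrt t := le_mul_of_one_le_right (norm_nonneg _) hs1
            linarith
        _ = (k + ‖c‖) * Real.sqrt t := by ring
        _ ≤ K * Real.sqrt t := by
            have : k ≤ max k 0 := le_max_left _ _
            nlinarith
    have hKst : K * Real.sqrt t ≤ A * t := by
      have h2K : 2 * K / ‖a‖ ≤ Real.sqrt t := by
        have h1 : (2 * K / ‖a‖) ^ 2 ≤ t := by
          have : (2 * K / ‖a‖) ^ 2 + 1 ≤ T := le_max_right _ _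
          linarith
        calc 2 * K / ‖a‖ ≤ Real.sqrt ((2 * K / ‖a‖) ^ 2) := by
              rw [Real.sqrt_sq (by positivity)]
          _ ≤ Real.sqrt t := Real.sqrt_le_sqrt h1
      have : 2 * K ≤ ‖a‖ * Real.sqrt t := by
        rw [div_le_iff₀ hna] at h2K; linarith
      have hsq : Real.sqrt t * Real.sqrt t = t := Real.mul_self_sqrt ht0.le
      nlinarith [hs0]
    have hya : ‖t • a‖ = t * ‖a‖ := by
      rw [norm_smul, Real.norm_eq_abs, abs_of_pos ht0]
    have htri : ‖t • a‖ ≤ ‖t • a + φ t + c‖ + ‖φ t + c‖ := by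
      have h := norm_sub_le (t • a + φ t + c) (φ t + c)
      have he : t • a + φ t + c - (φ t + c) = t • a := by abel
      rwa [he] at h
    have : ‖t • a‖ - K * Real.sqrt t ≤ ‖t • a + φ t + c‖ := by linarith
    rw [hya] at this
    nlinarith
  -- key pointwise facts for t ≥ T
  have main : ∀ t : ℝ, T ≤ t →
      |‖t • a + φ t + c‖ ^ (-α) - ‖t • a‖ ^ (-α)| ≤ C * t ^ (-(1 / 2 + α)) := by
    intro t ht
    have ht1 : (1:ℝ) ≤ t := le_trans hT1 ht
    have ht0 : 0 < t := lt_of_lt_of_le one_pos ht1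
    have hst : Real.sqrt t ≤ t := by
      nlinarith [Real.sq_sqrt ht0.le, Real.sqrt_nonneg t, Real.sqrt_le_sqrt ht1,
        Real.sqrt_one]
    have hs1 : 1 ≤ Real.sqrt t := by
      simpa using Real.sqrt_le_sqrt ht1
    have hs0 : 0 < Real.sqrt t := lt_of_lt_of_le one_pos hs1
    -- ‖φ t + c‖ ≤ K √t
    have hφc' : ‖φ t + c‖ ≤ K * Real.sqrt t := by
      calc ‖φ t + c‖ ≤ ‖φ t‖ + ‖c‖ := norm_add_le _ _
        _ ≤ k * Real.sqrt t + ‖c‖ * Real.sqrt t := by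
            have := hφ t ht1
            have : ‖c‖ ≤ ‖c‖ * Real.sqrt t := le_mul_of_one_le_right (norm_nonneg _) hs1
            nlinarith [hφ t ht1]
        _ = (k + ‖c‖) * Real.sqrt t := by ring
        _ ≤ K * Real.sqrt t := by
            have : k ≤ max k 0 := le_max_left _ _
            nlinarith
    -- K √t ≤ A t
    have hKst : K * Real.sqrt t ≤ A * t := by
      have h2K : 2 * K / ‖a‖ ≤ Real.sqrt t := by
        have h1 : (2 * K / ‖a‖) ^ 2 ≤ t := by
          have : (2 * K / ‖a‖) ^ 2 + 1 ≤ T := le_max_right _ _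
          linarith
        calc 2 * K / ‖a‖ ≤ Real.sqrt ((2 * K / ‖a‖) ^ 2) := by
              rw [Real.sqrt_sq (by positivity)]
          _ ≤ Real.sqrt t := Real.sqrt_le_sqrt h1
      have : 2 * K ≤ ‖a‖ * Real.sqrt t := by
        rw [div_le_iff₀ hna] at h2K; linarith
      have hsq : Real.sqrt t * Real.sqrt t = t := Real.mul_self_sqrt ht0.le
      nlinarith [hs0]
    have hya : ‖t • a‖ = t * ‖a‖ := by
      rw [norm_smul, Real.norm_eq_abs, abs_of_pos ht0]
    -- lower bounds
    have hym : A * t ≤ ‖t • a‖ := by rw [hya]; nlinarith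
    have hxm : A * t ≤ ‖t • a + φ t + c‖ := hlow t ht
    have hdiff : |‖t • a + φ t + c‖ - ‖t • a‖| ≤ K * Real.sqrt t := by
      have := abs_norm_sub_norm_le (t • a + φ t + c) (t • a)
      have he : t • a + φ t + c - t • a = φ t + c := by abel
      rw [he] at this
      linarith
    have hmv := rpow_neg_lipschitz hα0 (by positivity : (0:ℝ) < A * t) hxm hym
    have hmono : α * (A * t) ^ (-α - 1) * |‖t • a + φ t + c‖ - ‖t • a‖|
        ≤ α * (A * t) ^ (-α - 1) * (K * Real.sqrt t) := by
      have : (0:ℝ) ≤ α * (A * t) ^ (-α - 1) := by positivity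
      exact mul_le_mul_of_nonneg_left hdiff this
    have hcalc : α * (A * t) ^ (-α - 1) * (K * Real.sqrt t) = C * t ^ (-(1 / 2 + α)) := by
      rw [Real.mul_rpow hA0.le ht0.le, Real.sqrt_eq_rpow]
      rw [hC]
      rw [show (-(1/2 + α) : ℝ) = (-α - 1) + 1/2 by ring, Real.rpow_add ht0]
      ring
    calc |‖t • a + φ t + c‖ ^ (-α) - ‖t • a‖ ^ (-α)|
        ≤ α * (A * t) ^ (-α - 1) * |‖t • a + φ t + c‖ - ‖t • a‖| := hmv
      _ ≤ α * (A * t) ^ (-α - 1) * (K * Real.sqrt t) := hmono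
      _ = C * t ^ (-(1 / 2 + α)) := hcalc
  refine ⟨T, hT1, C, ?_, main⟩
  -- integrability
  have hcont : ContinuousOn (fun t => ‖t • a + φ t + c‖ ^ (-α) - ‖t • a‖ ^ (-α))
      (Set.Ici T) := by
    have h1 : ContinuousOn (fun t : ℝ => ‖t • a + φ t + c‖) (Set.Ici T) :=
      (((continuous_id.smul continuous_const).add hφc).add continuous_const).norm.continuousOn
    have h2 : ContinuousOn (fun t : ℝ => ‖t • a‖) (Set.Ici T) :=
      (continuous_id.smul continuous_const).norm.continuousOn
    apply ContinuousOn.sub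
    · apply h1.rpow_const
      intro t ht
      left
      have ht0 : 0 < t := lt_of_lt_of_le hT0 ht
      have := main t ht
      -- reuse positivity: ‖t•a+φ t+c‖ ≥ A t > 0 was internal; re-derive simply
      intro h0
      have hxm : A * t ≤ ‖t • a + φ t + c‖ := hlow t ht
      have : (0:ℝ) < ‖t • a + φ t + c‖ := lt_of_lt_of_le (by positivity) hxm
      rw [h0] at this; exact lt_irrefl _ this
    · apply h2.rpow_const
      intro t ht
      left
      have ht0 : 0 < t := lt_of_lt_of_le hT0 ht
      have : ‖t • a‖ = t * ‖a‖ := by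
        rw [norm_smul, Real.norm_eq_abs, abs_of_pos ht0]
      rw [this]
      positivity
  have hg : IntegrableOn (fun t : ℝ => C * t ^ (-(1 / 2 + α))) (Set.Ici T) := by
    rw [integrableOn_Ici_iff_integrableOn_Ioi]
    exact (integrableOn_Ioi_rpow_of_lt (by linarith) hT0).const_mul C
  refine Integrable.mono' hg (hcont.aestronglyMeasurable measurableSet_Ici) ?_
  filter_upwards [ae_restrict_mem measurableSet_Ici] with t ht
  simpa [Real.norm_eq_abs] using main t ht
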